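/- The category of pastures has fibered products (pullbacks): for any pastures P, P₁, P₂ and any morphisms of pastures f₁ : P₁ → P and f₂ : P₂ → P, there exists a pasture Q together with morphisms of pastures π₁ : Q → P₁ and π₂ : Q → P₂ with f₁ ∘ π₁ = f₂ ∘ π₂, such that for every pasture P' with morphisms g₁ : P' → P₁ and g₂ : P' → P₂ satisfying f₁ ∘ g₁ = f₂ ∘ g₂ there is a unique morphism of pastures g : P' → Q with π₁ ∘ g = g₁ and π₂ ∘ g = g₂. -/
import Mathlib


universe u v w

/-- A pasture structure on a type `P`: a multiplication, a zero, a one,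
an involution `neg`, and a ternary nullset relation `null a b c`
(meaning "`a + b + c = 0`"). -/
structure PastureStr (P : Type u) where
  mul : P → P → P
  zero : P
  one : P
  neg : P → P
  null : P → P → P → Prop

/-- `P` together with a `PastureStr` is a pasture: `P` is a commutative
monoid with zero whose nonzero elements form an abelian group, `neg` is an
involution fixing `0`, and the nullset is invariant under permutations,
invariant under multiplication, and satisfies `a + b + 0 = 0 ↔ a = -b`. -/
structure PastureStr.IsPasture {P : Type u} (S : PastureStr P) : Prop where
  mul_comm : ∀ a b : P, S.mul a b = S.mul b a
  mul_assoc : ∀ a b c : P, S.mul (S.mul a b) c = S.mul a (S.mul b c)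
  one_mul : ∀ a : P, S.mul S.one a = a
  zero_mul : ∀ a : P, S.mul S.zero a = S.zero
  one_ne_zero : S.one ≠ S.zero
  mul_ne_zero : ∀ a b : P, a ≠ S.zero → b ≠ S.zero → S.mul a b ≠ S.zero
  exists_inv : ∀ a : P, a ≠ S.zero → ∃ b : P, S.mul a b = S.one
  neg_neg : ∀ a : P, S.neg (S.neg a) = a
  neg_zero : S.neg S.zero = S.zero
  null_swap_left : ∀ a b c : P, S.null a b c → S.null b a c
  null_swap_right : ∀ a b c : P, S.null a b c → S.null a c b
  null_mul : ∀ d a b c : P, S.null a b c → S.null (S.mul d a) (S.mul d b) (S.mul d c)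
  null_zero : ∀ a b : P, S.null a b S.zero ↔ a = S.neg b

/-- A morphism of pastures: a multiplicative map preserving `0`, `1`,
the involution and the nullset. -/
structure PastureStr.IsHom {P : Type u} {P' : Type v} (S : PastureStr P) (T : PastureStr P')
    (f : P → P') : Prop where
  map_mul : ∀ a b : P, f (S.mul a b) = T.mul (f a) (f b)
  map_zero : f S.zero = T.zero
  map_one : f S.one = T.one
  map_neg : ∀ a : P, f (S.neg a) = T.neg (f a)
  map_null : ∀ a b c : P, S.null a b c → T.null (f a) (f b) (f c)

/-- **The category of pastures has fibered products.**
For pastures `P, P₁, P₂` and morphisms `f₁ : P₁ → P`, `f₂ : P₂ → P` there is a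
pasture `Q` with morphisms `π₁ : Q → P₁`, `π₂ : Q → P₂` satisfying
`f₁ ∘ π₁ = f₂ ∘ π₂`, such that for every pasture `P'` with morphisms
`g₁ : P' → P₁`, `g₂ : P' → P₂` with `f₁ ∘ g₁ = f₂ ∘ g₂` there is a unique
morphism `g : P' → Q` with `π₁ ∘ g = g₁` and `π₂ ∘ g = g₂`. -/
theorem pastures_have_fibered_products
    {P P₁ P₂ : Type u} (S : PastureStr P) (S₁ : PastureStr P₁) (S₂ : PastureStr P₂)
    (hS : S.IsPasture) (hS₁ : S₁.IsPasture) (hS₂ : S₂.IsPasture)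
    (f₁ : P₁ → P) (f₂ : P₂ → P) (hf₁ : S₁.IsHom S f₁) (hf₂ : S₂.IsHom S f₂) :
    ∃ (Q : Type u) (SQ : PastureStr Q), SQ.IsPasture ∧
      ∃ (π₁ : Q → P₁) (π₂ : Q → P₂),
        PastureStr.IsHom SQ S₁ π₁ ∧ PastureStr.IsHom SQ S₂ π₂ ∧
        f₁ ∘ π₁ = f₂ ∘ π₂ ∧
        ∀ (P' : Type v) (S' : PastureStr P'), S'.IsPasture →
          ∀ (g₁ : P' → P₁) (g₂ : P' → P₂),
            PastureStr.IsHom S' S₁ g₁ → PastureStr.IsHom S' S₂ g₂ →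
            f₁ ∘ g₁ = f₂ ∘ g₂ →
            ∃! g : P' → Q,
              PastureStr.IsHom S' SQ g ∧ π₁ ∘ g = g₁ ∧ π₂ ∘ g = g₂ := by
  classical
  -- a pasture morphism sends nonzero elements to nonzero elements
  have hne₁ : ∀ a : P₁, a ≠ S₁.zero → f₁ a ≠ S.zero := by
    intro a ha h0
    obtain ⟨b, hb⟩ := hS₁.exists_inv a ha
    have : S.mul (f₁ a) (f₁ b) = S.one := by rw [← hf₁.map_mul, hb, hf₁.map_one]
    rw [h0, hS.zero_mul] at this
    exact hS.one_ne_zero this.symm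
  have hne₂ : ∀ a : P₂, a ≠ S₂.zero → f₂ a ≠ S.zero := by
    intro a ha h0
    obtain ⟨b, hb⟩ := hS₂.exists_inv a ha
    have : S.mul (f₂ a) (f₂ b) = S.one := by rw [← hf₂.map_mul, hb, hf₂.map_one]
    rw [h0, hS.zero_mul] at this
    exact hS.one_ne_zero this.symm
  refine ⟨{q : P₁ × P₂ // f₁ q.1 = f₂ q.2},
    { mul := fun a b => ⟨(S₁.mul a.1.1 b.1.1, S₂.mul a.1.2 b.1.2), by
        rw [hf₁.map_mul, hf₂.map_mul, a.2, b.2]⟩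
      zero := ⟨(S₁.zero, S₂.zero), by rw [hf₁.map_zero, hf₂.map_zero]⟩
      one := ⟨(S₁.one, S₂.one), by rw [hf₁.map_one, hf₂.map_one]⟩
      neg := fun a => ⟨(S₁.neg a.1.1, S₂.neg a.1.2), by
        rw [hf₁.map_neg, hf₂.map_neg, a.2]⟩
      null := fun a b c => S₁.null a.1.1 b.1.1 c.1.1 ∧ S₂.null a.1.2 b.1.2 c.1.2 },
    ?_, fun q => q.1.1, fun q => q.1.2, ?_, ?_, ?_, ?_⟩
  · -- the fibered product is a pasture
    have hz : ∀ q : {q : P₁ × P₂ // f₁ q.1 = f₂ q.2},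
        q ≠ ⟨(S₁.zero, S₂.zero), by rw [hf₁.map_zero, hf₂.map_zero]⟩ →
        q.1.1 ≠ S₁.zero ∧ q.1.2 ≠ S₂.zero := by
      intro q hq
      by_cases h1 : q.1.1 = S₁.zero
      · by_cases h2 : q.1.2 = S₂.zero
        · exact absurd (Subtype.ext (Prod.ext h1 h2)) hq
        · have := hne₂ _ h2
          rw [← q.2, h1, hf₁.map_zero] at this
          exact absurd rfl this
      · refine ⟨h1, ?_⟩
        intro h2
        have := hne₁ _ h1
        rw [q.2, h2, hf₂.map_zero] at this
        exact this rfl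
    constructor
    · intro a b; exact Subtype.ext (Prod.ext (hS₁.mul_comm _ _) (hS₂.mul_comm _ _))
    · intro a b c; exact Subtype.ext (Prod.ext (hS₁.mul_assoc _ _ _) (hS₂.mul_assoc _ _ _))
    · intro a; exact Subtype.ext (Prod.ext (hS₁.one_mul _) (hS₂.one_mul _))
    · intro a; exact Subtype.ext (Prod.ext (hS₁.zero_mul _) (hS₂.zero_mul _))
    · intro h
      exact hS₁.one_ne_zero (congrArg Prod.fst (Subtype.ext_iff.mp h))
    · intro a b ha hb h
      obtain ⟨ha1, _⟩ := hz a ha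
      obtain ⟨hb1, _⟩ := hz b hb
      exact hS₁.mul_ne_zero _ _ ha1 hb1 (congrArg Prod.fst (Subtype.ext_iff.mp h))
    · intro a ha
      obtain ⟨ha1, ha2⟩ := hz a ha
      obtain ⟨b₁, hb₁⟩ := hS₁.exists_inv _ ha1
      obtain ⟨b₂, hb₂⟩ := hS₂.exists_inv _ ha2
      have hb : f₁ b₁ = f₂ b₂ := by
        have e1 : S.mul (f₁ a.1.1) (f₁ b₁) = S.one := by
          rw [← hf₁.map_mul, hb₁, hf₁.map_one]
        have e2 : S.mul (f₂ a.1.2) (f₂ b₂) = S.one := by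
          rw [← hf₂.map_mul, hb₂, hf₂.map_one]
        calc f₁ b₁ = S.mul S.one (f₁ b₁) := (hS.one_mul _).symm
          _ = S.mul (S.mul (f₂ a.1.2) (f₂ b₂)) (f₁ b₁) := by rw [e2]
          _ = S.mul (f₂ b₂) (S.mul (f₂ a.1.2) (f₁ b₁)) := by
              rw [hS.mul_comm (f₂ a.1.2) (f₂ b₂), hS.mul_assoc]
          _ = S.mul (f₂ b₂) S.one := by rw [← a.2, e1]
          _ = f₂ b₂ := by rw [hS.mul_comm, hS.one_mul]
      exact ⟨⟨(b₁, b₂), hb⟩, Subtype.ext (Prod.ext hb₁ hb₂)⟩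
    · intro a; exact Subtype.ext (Prod.ext (hS₁.neg_neg _) (hS₂.neg_neg _))
    · exact Subtype.ext (Prod.ext hS₁.neg_zero hS₂.neg_zero)
    · intro a b c h; exact ⟨hS₁.null_swap_left _ _ _ h.1, hS₂.null_swap_left _ _ _ h.2⟩
    · intro a b c h; exact ⟨hS₁.null_swap_right _ _ _ h.1, hS₂.null_swap_right _ _ _ h.2⟩
    · intro d a b c h; exact ⟨hS₁.null_mul _ _ _ _ h.1, hS₂.null_mul _ _ _ _ h.2⟩
    · intro a b
      constructor
      · intro h
        exact Subtype.ext (Prod.ext ((hS₁.null_zero _ _).mp h.1) ((hS₂.null_zero _ _).mp h.2))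
      · intro h
        have h1 := congrArg Prod.fst (Subtype.ext_iff.mp h)
        have h2 := congrArg Prod.snd (Subtype.ext_iff.mp h)
        exact ⟨(hS₁.null_zero _ _).mpr h1, (hS₂.null_zero _ _).mpr h2⟩
  · exact ⟨fun a b => rfl, rfl, rfl, fun a => rfl, fun a b c h => h.1⟩
  · exact ⟨fun a b => rfl, rfl, rfl, fun a => rfl, fun a b c h => h.2⟩
  · exact funext fun q => q.2
  · intro P' S' hS' g₁ g₂ hg₁ hg₂ hcomp
    refine ⟨fun p => ⟨(g₁ p, g₂ p), congrFun hcomp p⟩, ⟨?_, rfl, rfl⟩, ?_⟩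
    · exact ⟨fun a b => Subtype.ext (Prod.ext (hg₁.map_mul a b) (hg₂.map_mul a b)),
        Subtype.ext (Prod.ext hg₁.map_zero hg₂.map_zero),
        Subtype.ext (Prod.ext hg₁.map_one hg₂.map_one),
        fun a => Subtype.ext (Prod.ext (hg₁.map_neg a) (hg₂.map_neg a)),
        fun a b c h => ⟨hg₁.map_null a b c h, hg₂.map_null a b c h⟩⟩
    · rintro g ⟨hg, h1, h2⟩
      funext p
      exact Subtype.ext (Prod.ext (congrFun h1 p) (congrFun h2 p))
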